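/- Component composition is well-defined: for any monotone composable components m1 and m2, the least fixed point of χ_{m1×m2} exists for every ρ⁻ ∈ Env(P⁻_{m1×m2}), and the resulting composition m1 × m2 is itself a monotone component with interface (P⁻_{m1×m2}, P⁺_{m1×m2}). -/

import Mathlib

namespace AbsCT

open Set

open scoped Classical

/-- A procedure environment over the set `P` of procedure names:
a map assigning to each `p ∈ P` a denotation (a binary relation on states). -/
def Env (State : Type*) {Prc : Type*} (P : Set Prc) : Type _ :=
  ↥P → Set (State × State)

namespace Env

variable {Prc State : Type*}

instance {P : Set Prc} : CompleteLattice (Env State P) :=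
  inferInstanceAs (CompleteLattice (↥P → Set (State × State)))

/-- The order `⊑` between procedure environments over possibly different domains. -/
def le {P P' : Set Prc} (ρ : Env State P) (ρ' : Env State P') : Prop :=
  ∃ h : P ⊆ P', ∀ p (hp : p ∈ P), ρ ⟨p, hp⟩ ⊆ ρ' ⟨p, h hp⟩

/-- Heterogeneous equality of environments: same domain, same denotations. -/
def eq' {P Q : Set Prc} (ρ : Env State P) (ρ' : Env State Q) : Prop :=
  P = Q ∧ ∀ p (hp : p ∈ P) (hq : p ∈ Q), ρ ⟨p, hp⟩ = ρ' ⟨p, hq⟩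

/-- Greatest lower bound `⊓`, pointwise by intersection, on the intersection of domains. -/
def meet {P Q : Set Prc} (ρ1 : Env State P) (ρ2 : Env State Q) : Env State (P ∩ Q) :=
  fun p => ρ1 ⟨p.1, p.2.1⟩ ∩ ρ2 ⟨p.1, p.2.2⟩

/-- Extension of an environment to the whole name universe, by `∅` outside its domain. -/
def ext0 {P : Set Prc} (ρ : Env State P) : Prc → Set (State × State) :=
  fun p => ⋃ h : p ∈ P, ρ ⟨p, h⟩

/-- Least upper bound `⊔`, pointwise by union, on the union of domains. -/
def join {P Q : Set Prc} (ρ1 : Env State P) (ρ2 : Env State Q) : Env State (P ∪ Q) :=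
  fun p => ρ1.ext0 p.1 ∪ ρ2.ext0 p.1

/-- Transport of an environment to a smaller domain. -/
def up {P Q : Set Prc} (ρ : Env State P) (h : Q ⊆ P) : Env State Q :=
  fun p => ρ ⟨p.1, h p.2⟩

/-- Restriction of an environment to (the intersection of its domain with) `Q`. -/
def res {P : Set Prc} (ρ : Env State P) (Q : Set Prc) : Env State (P ∩ Q) :=
  fun p => ρ ⟨p.1, p.2.1⟩

end Env

/-- The environment `ρ⊤_P` mapping every `p ∈ P` to `State × State`. -/
def topEnv (State : Type*) {Prc : Type*} (P : Set Prc) : Env State P :=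
  fun _ => Set.univ

/-- A component: an interface of disjoint finite sets of required and provided
procedure names, together with a map from environments of the required
procedures to environments of the provided ones. -/
structure Component (Prc State : Type*) where
  req : Set Prc
  prov : Set Prc
  hdisj : Disjoint req prov
  hreqFin : req.Finite
  hprovFin : prov.Finite
  func : Env State req → Env State prov

namespace Component

variable {Prc State : Type*}

/-- Monotonicity of a component. -/
def Mono (m : Component Prc State) : Prop :=
  ∀ ρ ρ' : Env State m.req, ρ ≤ ρ' → m.func ρ ≤ m.func ρ'

/-- Two components are composable iff their provided sets are disjoint. -/
def Composable (m1 m2 : Component Prc State) : Prop :=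
  m1.prov ∩ m2.prov = ∅

/-- The required procedures of the composition `m1 × m2`. -/
def compReq (m1 m2 : Component Prc State) : Set Prc :=
  (m1.req ∪ m2.req) \ (m1.prov ∪ m2.prov)

/-- The function `χ_{m1×m2}`, relative to `ρ⁻ ∈ Env(P⁻_{m1×m2})`. -/
def chi (m1 m2 : Component Prc State) (ρm : Env State (compReq m1 m2))
    (ρp : Env State (m1.prov ∪ m2.prov)) : Env State (m1.prov ∪ m2.prov) :=
  fun p =>
    if h1 : p.1 ∈ m1.prov then
      m1.func (fun q =>
        if h2 : q.1 ∈ m2.prov then ρp ⟨q.1, Or.inr h2⟩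
        else ρm ⟨q.1, ⟨Or.inl q.2, by
          rintro (hc | hc)
          · exact Set.disjoint_left.mp m1.hdisj q.2 hc
          · exact h2 hc⟩⟩) ⟨p.1, h1⟩
    else
      m2.func (fun q =>
        if h2 : q.1 ∈ m1.prov then ρp ⟨q.1, Or.inl h2⟩
        else ρm ⟨q.1, ⟨Or.inr q.2, by
          rintro (hc | hc)
          · exact h2 hc
          · exact Set.disjoint_left.mp m2.hdisj q.2 hc⟩⟩) ⟨p.1, p.2.resolve_left h1⟩

/-- Component composition `m1 × m2`: its function maps `ρ⁻` to the least fixed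
point of `χ_{m1×m2}` (obtained, à la Knaster-Tarski, as the infimum of all
prefixed points). -/
noncomputable def comp (m1 m2 : Component Prc State) : Component Prc State where
  req := compReq m1 m2
  prov := m1.prov ∪ m2.prov
  hdisj := Set.disjoint_left.mpr fun _ hq => hq.2
  hreqFin := (m1.hreqFin.union m2.hreqFin).diff
  hprovFin := m1.hprovFin.union m2.hprovFin
  func := fun ρm => sInf {ρp | chi m1 m2 ρm ρp ≤ ρp}

/-- Heterogeneous equality of components: same interface, and equal as functions. -/
def Equiv (m1 m2 : Component Prc State) : Prop :=
  m1.req = m2.req ∧ m1.prov = m2.prov ∧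
  ∀ (ρ : Env State m1.req) (ρ' : Env State m2.req),
    Env.eq' ρ ρ' → Env.eq' (m1.func ρ) (m2.func ρ')

end Component

/-- A denotational contract: an interface of disjoint finite sets of required
and provided procedure names, an assumption environment over the required
procedures, and a guarantee environment over the provided ones. -/
structure DContract (Prc State : Type*) where
  req : Set Prc
  prov : Set Prc
  hdisj : Disjoint req prov
  hreqFin : req.Finite
  hprovFin : prov.Finite
  assm : Env State req
  guar : Env State prov

namespace DContract

variable {Prc State : Type*}

/-- `m ⊨ c` : the component `m` implements the contract `c`. -/
def Implements (m : Component Prc State) (c : DContract Prc State) : Prop :=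
  c.req ⊆ m.req ∧ m.prov ⊆ c.prov ∧
    Env.le
      (m.func ((c.assm.join (topEnv State (m.req \ c.req))).up
        (fun p hp => by
          by_cases h : p ∈ c.req
          · exact Or.inl h
          · exact Or.inr ⟨hp, h⟩)))
      c.guar

/-- `m` is an environment for the contract `c`. -/
def IsEnvFor (m : Component Prc State) (c : DContract Prc State) : Prop :=
  ∀ m' : Component Prc State, Implements m' c →
    Component.Composable m m' ∧
    ∀ ρ : Env State (Component.compReq m m'),
      Env.le (((m.comp m').func ρ).res c.prov) c.guar

/-- Contract refinement `c ⪯ c'`. -/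
def Refines (c c' : DContract Prc State) : Prop :=
  Env.le c'.assm c.assm ∧ Env.le c.guar c'.guar

/-- Contract conjunction `c1 ∧ c2`. -/
def conj (c1 c2 : DContract Prc State) : DContract Prc State where
  req := c1.req ∪ c2.req
  prov := c1.prov ∩ c2.prov
  hdisj := Set.disjoint_left.mpr (by
    rintro p (hp | hp) hq
    · exact Set.disjoint_left.mp c1.hdisj hp hq.1
    · exact Set.disjoint_left.mp c2.hdisj hp hq.2)
  hreqFin := c1.hreqFin.union c2.hreqFin
  hprovFin := c1.hprovFin.inter_of_left _
  assm := c1.assm.join c2.assm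
  guar := c1.guar.meet c2.guar

/-- Contract composability. -/
def Composable (c1 c2 : DContract Prc State) : Prop :=
  c1.prov ∩ c2.prov = ∅ ∧
  (∀ p (h1 : p ∈ c1.req) (h2 : p ∈ c2.prov), c2.guar ⟨p, h2⟩ ⊆ c1.assm ⟨p, h1⟩) ∧
  (∀ p (h2 : p ∈ c2.req) (h1 : p ∈ c1.prov), c1.guar ⟨p, h1⟩ ⊆ c2.assm ⟨p, h2⟩)

/-- Contract composition `c1 ⊗ c2`. -/
def comp (c1 c2 : DContract Prc State) : DContract Prc State where
  req := (c1.req ∪ c2.req) \ (c1.prov ∪ c2.prov)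
  prov := c1.prov ∪ c2.prov
  hdisj := Set.disjoint_left.mpr fun _ hq => hq.2
  hreqFin := (c1.hreqFin.union c2.hreqFin).diff
  hprovFin := c1.hprovFin.union c2.hprovFin
  assm := fun p =>
    (⋂ h : p.1 ∈ c1.req, c1.assm ⟨p.1, h⟩) ∩ ⋂ h : p.1 ∈ c2.req, c2.assm ⟨p.1, h⟩
  guar := c1.guar.join c2.guar

end DContract


/-- Component composition is well-defined: for monotone composable
components `m1`, `m2`, the least fixed point of `χ_{m1×m2}` exists for every
`ρ⁻ ∈ Env(P⁻_{m1×m2})` (and is the value of `(m1 × m2)(ρ⁻)`), and the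
composition `m1 × m2` is itself a monotone component with interface
`(P⁻_{m1×m2}, P⁺_{m1×m2})`. -/
theorem chi_mono {Prc State : Type*} (m1 m2 : Component Prc State)
    (h1 : m1.Mono) (h2 : m2.Mono)
    {ρm ρm' : Env State (Component.compReq m1 m2)}
    {ρp ρp' : Env State (m1.prov ∪ m2.prov)}
    (hm : ρm ≤ ρm') (hp : ρp ≤ ρp') :
    Component.chi m1 m2 ρm ρp ≤ Component.chi m1 m2 ρm' ρp' := by
  intro p
  unfold Component.chi
  by_cases hp1 : p.1 ∈ m1.prov
  · simp only [hp1, dif_pos]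
    apply h1
    intro q
    by_cases hq : q.1 ∈ m2.prov
    · simp only [hq, dif_pos]; exact hp _
    · simp only [hq, dif_neg, not_false_iff]; exact hm _
  · simp only [hp1, dif_neg, not_false_iff]
    apply h2
    intro q
    by_cases hq : q.1 ∈ m1.prov
    · simp only [hq, dif_pos]; exact hp _
    · simp only [hq, dif_neg, not_false_iff]; exact hm _

theorem comp_well_defined {Prc State : Type*} (m1 m2 : Component Prc State)
    (h1 : m1.Mono) (h2 : m2.Mono) (hc : Component.Composable m1 m2) :
    (m1.comp m2).req = (m1.req ∪ m2.req) \ (m1.prov ∪ m2.prov) ∧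
    (m1.comp m2).prov = m1.prov ∪ m2.prov ∧
    (∀ ρm : Env State (Component.compReq m1 m2),
      IsLeast {ρ' | Component.chi m1 m2 ρm ρ' = ρ'} ((m1.comp m2).func ρm)) ∧
    (m1.comp m2).Mono := by
  refine ⟨rfl, rfl, ?_, ?_⟩
  · intro ρm
    have hF : ∀ {a b : Env State (m1.prov ∪ m2.prov)}, a ≤ b →
        Component.chi m1 m2 ρm a ≤ Component.chi m1 m2 ρm b :=
      fun h => chi_mono m1 m2 h1 h2 le_rfl h
    set S : Set (Env State (m1.prov ∪ m2.prov)) :=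
      {ρp | Component.chi m1 m2 ρm ρp ≤ ρp} with hS
    have haS : Component.chi m1 m2 ρm (sInf S) ≤ sInf S := by
      apply le_sInf
      intro b hb
      exact le_trans (hF (sInf_le hb)) hb
    have hfix : Component.chi m1 m2 ρm (sInf S) = sInf S :=
      le_antisymm haS (sInf_le (hF haS))
    exact ⟨hfix, fun b hb => sInf_le (le_of_eq hb)⟩
  · intro ρm ρm' hmm
    apply sInf_le_sInf
    intro ρp hρp
    exact le_trans (chi_mono m1 m2 h1 h2 hmm le_rfl) hρp

end AbsCT
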